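/- For every z ∈ ℝⁿ with ‖z‖₂ = 1, letting z₀² = min_k z_k², the minimum over unit vectors v ∈ ℝⁿ with vᵀz = 0 of Σ_{k=1}^n v_k² z_k² is at least z₀² and at most (n/(n−1))(1 − z₀²) z₀². -/

import Mathlib

lemma stmt8_tangent {c m w : ℝ} (hc : 0 ≤ c) (hm : c < m) (hw : c < w) :
    m/(m-c) - c*(w-m)/(m-c)^2 ≤ w/(w-c) := by
  have h1 : (0:ℝ) < w - c := sub_pos.mpr hw
  have h2 : (0:ℝ) < m - c := sub_pos.mpr hm
  have key : w/(w-c) - (m/(m-c) - c*(w-m)/(m-c)^2) = c*(w-m)^2/((w-c)*(m-c)^2) := by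
    field_simp
    ring
  have h3 : (0:ℝ) ≤ c*(w-m)^2/((w-c)*(m-c)^2) := by positivity
  linarith

lemma stmt8_pair {n : ℕ} (z : Fin n → ℝ) (i0 j : Fin n) (hji : j ≠ i0)
    (hpos : 0 < z i0 ^ 2 + z j ^ 2) :
    ∃ v : Fin n → ℝ, (∑ k, v k ^ 2 = 1) ∧ (∑ k, v k * z k = 0) ∧
      ∑ k, v k ^ 2 * z k ^ 2 = 2 * z i0 ^ 2 * z j ^ 2 / (z i0 ^ 2 + z j ^ 2) := by
  have hsum : ∀ f : Fin n → ℝ, (∀ k, k ≠ i0 → k ≠ j → f k = 0) →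
      ∑ k, f k = f i0 + f j := by
    intro f hf
    rw [← Finset.sum_subset (Finset.subset_univ {i0, j})
      (fun x _ hx => by
        simp only [Finset.mem_insert, Finset.mem_singleton] at hx
        push_neg at hx
        exact hf x hx.1 hx.2)]
    rw [Finset.sum_pair (Ne.symm hji)]
  set r : ℝ := Real.sqrt (z i0 ^ 2 + z j ^ 2) with hr_def
  have hrpos : 0 < r := Real.sqrt_pos.mpr hpos
  have hr2 : r ^ 2 = z i0 ^ 2 + z j ^ 2 := Real.sq_sqrt hpos.le
  have hrne : r ≠ 0 := hrpos.ne'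
  set v : Fin n → ℝ := fun k => if k = i0 then z j / r else if k = j then -z i0 / r else 0
    with hv_def
  have hvi0 : v i0 = z j / r := by rw [hv_def]; simp
  have hvj : v j = -z i0 / r := by rw [hv_def]; simp [hji]
  have hv0 : ∀ k, k ≠ i0 → k ≠ j → v k = 0 := by
    intro k h1 h2; rw [hv_def]; simp [h1, h2]
  refine ⟨v, ?_, ?_, ?_⟩
  · rw [hsum _ (fun k h1 h2 => by rw [hv0 k h1 h2]; ring), hvi0, hvj]
    rw [div_pow, div_pow, neg_pow, hr2]
    field_simp
    ring
  · rw [hsum _ (fun k h1 h2 => by rw [hv0 k h1 h2]; ring), hvi0, hvj]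
    ring
  · rw [hsum _ (fun k h1 h2 => by rw [hv0 k h1 h2]; ring), hvi0, hvj]
    rw [div_pow, div_pow, neg_pow, hr2]
    field_simp
    ring

lemma stmt8_eigen {n : ℕ} (z : Fin n → ℝ) (c : ℝ) (i0 j : Fin n) (hji : j ≠ i0)
    (hcpos : 0 < c) (hac : z i0 ^ 2 < c) (hzi0 : z i0 ≠ 0)
    (hkc : ∀ k, k ≠ i0 → c < z k ^ 2)
    (hF : 0 ≤ ∑ k, z k ^ 2 / (z k ^ 2 - c)) :
    ∃ v : Fin n → ℝ, (∑ k, v k ^ 2 = 1) ∧ (∑ k, v k * z k = 0) ∧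
      ∑ k, v k ^ 2 * z k ^ 2 ≤ c := by
  have hdk : ∀ k, z k ^ 2 - c ≠ 0 := by
    intro k
    by_cases hk : k = i0
    · subst hk; intro h; linarith
    · have := hkc k hk; intro h'; linarith
  have hzj : z j ≠ 0 := by
    intro h
    have := hkc j hji
    rw [h] at this; simp at this; linarith
  set F : ℝ := ∑ k, z k ^ 2 / (z k ^ 2 - c) with hF_def
  set ε : ℝ := -F / z i0 with hε_def
  set v' : Fin n → ℝ := fun k => z k / (z k ^ 2 - c) + (if k = i0 then ε else 0)
    with hv'_def
  have hεz : ε * z i0 = -F := by rw [hε_def]; field_simp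
  have horth : ∑ k, v' k * z k = 0 := by
    have hterm : ∀ k, v' k * z k
        = z k ^ 2 / (z k ^ 2 - c) + (if k = i0 then ε * z i0 else 0) := by
      intro k
      rw [hv'_def]
      by_cases hk : k = i0
      · subst hk; simp only [if_pos rfl, if_true]
        have := hdk k
        field_simp
      · simp only [if_neg hk, add_zero]
        have := hdk k
        field_simp
    rw [Finset.sum_congr rfl (fun k _ => hterm k), Finset.sum_add_distrib,
      Finset.sum_ite_eq' Finset.univ i0 (fun _ => ε * z i0), if_pos (Finset.mem_univ i0),
      ← hF_def, hεz]
    ring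
  set N : ℝ := ∑ k, v' k ^ 2 with hN_def
  have hNpos : 0 < N := by
    have hvj : v' j = z j / (z j ^ 2 - c) := by rw [hv'_def]; simp [hji]
    have hvjne : v' j ≠ 0 := by rw [hvj]; exact div_ne_zero hzj (hdk j)
    have hjval : 0 < v' j ^ 2 := (sq_nonneg _).lt_of_ne (Ne.symm (pow_ne_zero 2 hvjne))
    have hle : v' j ^ 2 ≤ ∑ k, v' k ^ 2 :=
      Finset.single_le_sum (f := fun k => v' k ^ 2) (fun k _ => sq_nonneg (v' k))
        (Finset.mem_univ j)
    rw [hN_def]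
    linarith
  have hkey : ∀ k, v' k ^ 2 * (z k ^ 2 - c)
      = z k ^ 2 / (z k ^ 2 - c) + (if k = i0 then -2*F + ε^2*(z i0 ^ 2 - c) else 0) := by
    intro k
    by_cases hk : k = i0
    · subst hk
      rw [hv'_def]
      simp only [if_pos rfl, if_true]
      have h1 := hdk k
      rw [hε_def]
      field_simp
      ring
    · rw [hv'_def]
      simp only [if_neg hk, add_zero]
      have h1 := hdk k
      field_simp
  have hVN : ∑ k, v' k ^ 2 * z k ^ 2 ≤ c * N := by
    have hdiff : ∑ k, v' k ^ 2 * z k ^ 2 - c * N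
        = F + (-2*F + ε^2*(z i0 ^ 2 - c)) := by
      rw [hN_def, Finset.mul_sum, ← Finset.sum_sub_distrib]
      have h2 : ∀ k ∈ Finset.univ, v' k ^ 2 * z k ^ 2 - c * v' k ^ 2
          = v' k ^ 2 * (z k ^ 2 - c) := fun k _ => by ring
      rw [Finset.sum_congr rfl h2, Finset.sum_congr rfl (fun k _ => hkey k),
        Finset.sum_add_distrib, Finset.sum_ite_eq' Finset.univ i0,
        if_pos (Finset.mem_univ i0), ← hF_def]
    have hε2 : ε^2*(z i0 ^ 2 - c) ≤ 0 :=
      mul_nonpos_of_nonneg_of_nonpos (sq_nonneg _) (by linarith)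
    linarith
  have hs : Real.sqrt N ^ 2 = N := Real.sq_sqrt hNpos.le
  have hsne : Real.sqrt N ≠ 0 := by positivity
  refine ⟨fun k => v' k / Real.sqrt N, ?_, ?_, ?_⟩
  · calc ∑ k, (fun k => v' k / Real.sqrt N) k ^ 2
        = ∑ k, v' k ^ 2 / Real.sqrt N ^ 2 :=
          Finset.sum_congr rfl fun k _ => div_pow (v' k) (Real.sqrt N) 2
      _ = (∑ k, v' k ^ 2) / Real.sqrt N ^ 2 := (Finset.sum_div _ _ _).symm
      _ = 1 := by rw [← hN_def, hs]; exact div_self hNpos.ne'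
  · calc ∑ k, (fun k => v' k / Real.sqrt N) k * z k
        = ∑ k, v' k * z k / Real.sqrt N :=
          Finset.sum_congr rfl fun k _ => div_mul_eq_mul_div (v' k) (Real.sqrt N) (z k)
      _ = (∑ k, v' k * z k) / Real.sqrt N := (Finset.sum_div _ _ _).symm
      _ = 0 := by rw [horth, zero_div]
  · have heq : ∑ k, (fun k => v' k / Real.sqrt N) k ^ 2 * z k ^ 2
        = (∑ k, v' k ^ 2 * z k ^ 2) / N := by
      rw [Finset.sum_div]
      apply Finset.sum_congr rfl
      intro k _
      rw [div_pow, hs]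
      ring
    rw [heq, div_le_iff₀ hNpos]
    linarith [hVN]

lemma stmt8_F_nonneg {n : ℕ} (hn : 2 ≤ n) (z : Fin n → ℝ) (hz : ∑ k, z k ^ 2 = 1)
    (i0 : Fin n) (hi0 : ∀ k, z i0 ^ 2 ≤ z k ^ 2)
    (hna : (n:ℝ) * z i0 ^ 2 < 1) (hapos : 0 < z i0 ^ 2)
    (hkc : ∀ k, k ≠ i0 → ((n:ℝ)/((n:ℝ)-1)) * (1 - z i0 ^ 2) * z i0 ^ 2 < z k ^ 2) :
    0 ≤ ∑ k, z k ^ 2 / (z k ^ 2 - ((n:ℝ)/((n:ℝ)-1)) * (1 - z i0 ^ 2) * z i0 ^ 2) := by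
  have hn1 : (1:ℝ) ≤ (n:ℝ) - 1 := by
    have : (2:ℝ) ≤ (n:ℝ) := by exact_mod_cast hn
    linarith
  have hn1ne : (n:ℝ) - 1 ≠ 0 := by linarith
  set a : ℝ := z i0 ^ 2 with ha_def
  set c : ℝ := ((n:ℝ)/((n:ℝ)-1)) * (1 - a) * a with hc_def
  have ha1 : a < 1 := by nlinarith
  have hcpos : 0 < c := by
    rw [hc_def]
    have h1 : 0 < (n:ℝ)/((n:ℝ)-1) := by positivity
    have h2 : 0 < 1 - a := by linarith
    positivity
  have hac : a < c := by
    have hkey : c - a = a * (1 - (n:ℝ)*a) / ((n:ℝ) - 1) := by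
      rw [hc_def]; field_simp; ring
    have h1 : 0 < 1 - (n:ℝ)*a := by linarith
    have : 0 < c - a := by rw [hkey]; positivity
    linarith
  set m : ℝ := (1 - a) / ((n:ℝ) - 1) with hm_def
  have hmc : c < m := by
    have hkey : m - c = (1 - a) * (1 - (n:ℝ)*a) / ((n:ℝ) - 1) := by
      rw [hm_def, hc_def]; field_simp
    have h1 : 0 < 1 - (n:ℝ)*a := by linarith
    have h2 : 0 < 1 - a := by linarith
    have : 0 < m - c := by rw [hkey]; positivity
    linarith
  have hsum_erase : ∑ k ∈ Finset.univ.erase i0, z k ^ 2 = 1 - a := by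
    have h := Finset.sum_erase_add Finset.univ (fun k => z k ^ 2) (Finset.mem_univ i0)
    rw [hz] at h
    rw [ha_def]
    linarith [h]
  have hcardR : ((Finset.univ.erase i0).card : ℝ) = (n:ℝ) - 1 := by
    rw [Finset.card_erase_of_mem (Finset.mem_univ _), Finset.card_univ, Fintype.card_fin]
    have h1 : 1 ≤ n := by omega
    push_cast [Nat.cast_sub h1]
    ring
  have hT : ((n:ℝ) - 1) * (m / (m - c)) ≤
      ∑ k ∈ Finset.univ.erase i0, z k ^ 2 / (z k ^ 2 - c) := by
    have step : ∑ k ∈ Finset.univ.erase i0,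
        (m/(m-c) - c*(z k ^ 2 - m)/(m-c)^2) ≤
        ∑ k ∈ Finset.univ.erase i0, z k ^ 2 / (z k ^ 2 - c) := by
      apply Finset.sum_le_sum
      intro k hk
      exact stmt8_tangent hcpos.le hmc (hkc k (Finset.mem_erase.mp hk).1)
    have lhs_eq : ∑ k ∈ Finset.univ.erase i0,
        (m/(m-c) - c*(z k ^ 2 - m)/(m-c)^2) = ((n:ℝ) - 1) * (m / (m - c)) := by
      rw [Finset.sum_sub_distrib, Finset.sum_const, nsmul_eq_mul, hcardR]
      have h3 : ∑ k ∈ Finset.univ.erase i0, c*(z k ^ 2 - m)/(m-c)^2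
          = c * ((1 - a) - ((n:ℝ)-1) * m)/(m-c)^2 := by
        rw [← Finset.sum_div, ← Finset.mul_sum, Finset.sum_sub_distrib,
          Finset.sum_const, nsmul_eq_mul, hcardR, hsum_erase]
      rw [h3]
      have hm0 : (1 - a) - ((n:ℝ)-1) * m = 0 := by
        rw [hm_def]; field_simp; ring
      rw [hm0]
      simp
    linarith
  have hFsplit : ∑ k, z k ^ 2 / (z k ^ 2 - c)
      = ∑ k ∈ Finset.univ.erase i0, z k ^ 2 / (z k ^ 2 - c) + a / (a - c) := by
    rw [← Finset.sum_erase_add Finset.univ _ (Finset.mem_univ i0)]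
  have hid : a / (a - c) + ((n:ℝ) - 1) * (m / (m - c)) = 0 := by
    have e1 : a - c = a * ((n:ℝ)*a - 1) / ((n:ℝ)-1) := by
      rw [hc_def]; field_simp; ring
    have e2 : m - c = (1-a) * (1 - (n:ℝ)*a) / ((n:ℝ)-1) := by
      rw [hm_def, hc_def]; field_simp
    have hx1 : (n:ℝ)*a - 1 ≠ 0 := by intro h; linarith
    have hx2 : (1:ℝ) - a ≠ 0 := by intro h; linarith
    have hx3 : (1:ℝ) - (n:ℝ)*a ≠ 0 := by intro h; linarith
    have hx4 : a ≠ 0 := hapos.ne'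
    rw [e1, e2, hm_def]
    field_simp
    rw [show (a*(n:ℝ) - 1) = -(1 - a*(n:ℝ)) by ring, div_neg]
    ring
  rw [hFsplit]
  linarith

theorem stmt8 {n : ℕ} (hn : 2 ≤ n) (z : Fin n → ℝ) (hz : ∑ k, z k ^ 2 = 1) :
    (∀ v : Fin n → ℝ, ∑ k, v k ^ 2 = 1 → ∑ k, v k * z k = 0 →
      (⨅ k, z k ^ 2) ≤ ∑ k, v k ^ 2 * z k ^ 2) ∧
    (∃ v : Fin n → ℝ, ∑ k, v k ^ 2 = 1 ∧ ∑ k, v k * z k = 0 ∧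
      ∑ k, v k ^ 2 * z k ^ 2 ≤
        ((n : ℝ) / ((n : ℝ) - 1)) * (1 - ⨅ k, z k ^ 2) * (⨅ k, z k ^ 2)) := by
  have hne : Nonempty (Fin n) := ⟨⟨0, by omega⟩⟩
  obtain ⟨i0, hi0⟩ : ∃ i0 : Fin n, ∀ k, z i0 ^ 2 ≤ z k ^ 2 := Finite.exists_min _
  have hinf : (⨅ k, z k ^ 2) = z i0 ^ 2 :=
    le_antisymm (ciInf_le (Finite.bddBelow_range _) i0) (le_ciInf hi0)
  have hn1 : (1:ℝ) ≤ (n:ℝ) - 1 := by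
    have : (2:ℝ) ≤ (n:ℝ) := by exact_mod_cast hn
    linarith
  have hna : (n:ℝ) * z i0 ^ 2 ≤ 1 := by
    have h : (n:ℝ) * z i0 ^ 2 = ∑ _k : Fin n, z i0 ^ 2 := by
      rw [Finset.sum_const, Finset.card_univ, Fintype.card_fin, nsmul_eq_mul]
    rw [h, ← hz]
    exact Finset.sum_le_sum fun k _ => hi0 k
  constructor
  · intro v hv1 hv2
    rw [hinf]
    calc z i0 ^ 2 = ∑ k, v k ^ 2 * z i0 ^ 2 := by rw [← Finset.sum_mul, hv1, one_mul]
      _ ≤ ∑ k, v k ^ 2 * z k ^ 2 :=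
        Finset.sum_le_sum fun k _ => mul_le_mul_of_nonneg_left (hi0 k) (sq_nonneg _)
  · rw [hinf]
    by_cases ha : z i0 = 0
    · refine ⟨fun k => if k = i0 then 1 else 0, by simp, by simp [ha], ?_⟩
      have h3 : ∀ k, ((if k = i0 then (1:ℝ) else 0))^2 * z k ^ 2
          = if k = i0 then z i0 ^ 2 else 0 := by
        intro k
        by_cases h : k = i0 <;> simp [h]
      rw [Finset.sum_congr rfl (fun k _ => h3 k),
        Finset.sum_ite_eq' Finset.univ i0 (fun _ => z i0 ^ 2),
        if_pos (Finset.mem_univ i0), ha]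
      simp
    · have hapos : 0 < z i0 ^ 2 := by positivity
      obtain ⟨j, hjmem, hjmin⟩ :
          ∃ j ∈ Finset.univ.erase i0, ∀ k ∈ Finset.univ.erase i0, z j ^ 2 ≤ z k ^ 2 := by
        apply Finset.exists_min_image
        rw [← Finset.card_pos, Finset.card_erase_of_mem (Finset.mem_univ _)]
        simp; omega
      have hji : j ≠ i0 := (Finset.mem_erase.mp hjmem).1
      have hab : z i0 ^ 2 ≤ z j ^ 2 := hi0 j
      by_cases hbc : z j ^ 2 ≤ ((n:ℝ)/((n:ℝ)-1)) * (1 - z i0 ^ 2) * z i0 ^ 2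
      · obtain ⟨v, hv1, hv2, hv3⟩ := stmt8_pair z i0 j hji (by positivity)
        refine ⟨v, hv1, hv2, ?_⟩
        rw [hv3]
        have h2ab : 2 * z i0 ^ 2 * z j ^ 2 / (z i0 ^ 2 + z j ^ 2) ≤ z j ^ 2 := by
          rw [div_le_iff₀ (by positivity)]
          nlinarith [sq_nonneg (z j)]
        linarith
      · push_neg at hbc
        have hnalt : (n:ℝ) * z i0 ^ 2 < 1 := by
          rcases lt_or_eq_of_le hna with h | h
          · exact h
          · exfalso
            have hba : z j ^ 2 = z i0 ^ 2 := by
              by_contra hk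
              have hk' : z i0 ^ 2 < z j ^ 2 := lt_of_le_of_ne hab (Ne.symm hk)
              have hgt : (n:ℝ) * z i0 ^ 2 < ∑ k, z k ^ 2 := by
                have h4 : ∑ _k : Fin n, z i0 ^ 2 = (n:ℝ) * z i0 ^ 2 := by
                  rw [Finset.sum_const, Finset.card_univ, Fintype.card_fin, nsmul_eq_mul]
                rw [← h4]
                exact Finset.sum_lt_sum (fun i _ => hi0 i) ⟨j, Finset.mem_univ j, hk'⟩
              rw [hz, ← h] at hgt
              exact lt_irrefl _ hgt
            have hac : z i0 ^ 2 ≤ ((n:ℝ)/((n:ℝ)-1)) * (1 - z i0 ^ 2) * z i0 ^ 2 := by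
              rw [div_mul_eq_mul_div, div_mul_eq_mul_div, le_div_iff₀ (by linarith)]
              nlinarith
            rw [hba] at hbc
            linarith
        have hkc : ∀ k, k ≠ i0 → ((n:ℝ)/((n:ℝ)-1)) * (1 - z i0 ^ 2) * z i0 ^ 2 < z k ^ 2 := by
          intro k hk
          exact lt_of_lt_of_le hbc (hjmin k (Finset.mem_erase.mpr ⟨hk, Finset.mem_univ k⟩))
        have hcpos : 0 < ((n:ℝ)/((n:ℝ)-1)) * (1 - z i0 ^ 2) * z i0 ^ 2 := by
          have h1 : 0 < (n:ℝ)/((n:ℝ)-1) := by positivity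
          have h2 : z i0 ^ 2 < 1 := by nlinarith
          have h3 : 0 < 1 - z i0 ^ 2 := by linarith
          positivity
        have hac : z i0 ^ 2 < ((n:ℝ)/((n:ℝ)-1)) * (1 - z i0 ^ 2) * z i0 ^ 2 := by
          have hkey : ((n:ℝ)/((n:ℝ)-1)) * (1 - z i0 ^ 2) * z i0 ^ 2 - z i0 ^ 2
              = z i0 ^ 2 * (1 - (n:ℝ)* z i0 ^ 2) / ((n:ℝ) - 1) := by
            field_simp; ring
          have h1 : 0 < 1 - (n:ℝ) * z i0 ^ 2 := by linarith
          nlinarith [div_pos (mul_pos hapos h1) (by linarith : (0:ℝ) < (n:ℝ)-1)]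
        exact stmt8_eigen z _ i0 j hji hcpos hac ha hkc
          (stmt8_F_nonneg hn z hz i0 hi0 hnalt hapos hkc)
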